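/- Bus topology from the chain graph (Lemma 1): let k ≥ 2 and let G be the chain graph on vertex set V = {o_1,…,o_{k−1}} ∪ {c_1,…,c_k} with edge set E = ⋃_{i=1}^{k−1} {{o_i, c_i}, {o_i, c_{i+1}}}. Then applying, for each i = 1,…,k−1 in order, the operation 'local complementation at o_i followed by deletion of o_i' yields the path graph on {c_1,…,c_k} with edge set exactly {{c_i, c_{i+1}} : 1 ≤ i ≤ k−1}. -/

import Mathlib

/-- Local complementation of `G` at vertex `a`: edges inside the open neighborhood of `a`
are complemented, all other edges are unchanged. -/
def localComp {V : Type*} (G : SimpleGraph V) (a : V) : SimpleGraph V where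
  Adj x y := x ≠ y ∧ ((G.Adj a x ∧ G.Adj a y) ↔ ¬ G.Adj x y)
  symm := ⟨by
    rintro x y ⟨hxy, h⟩
    refine ⟨hxy.symm, ?_⟩
    constructor
    · rintro ⟨h1, h2⟩ hyx
      exact (h.mp ⟨h2, h1⟩) hyx.symm
    · intro hne
      have := h.mpr (fun hxy' => hne hxy'.symm)
      exact ⟨this.2, this.1⟩⟩
  loopless := ⟨fun x h => h.1 rfl⟩

/-- Vertex deletion: remove vertex `a` together with all edges incident to it
(the deleted vertex is kept as an isolated vertex of the ambient type). -/
def deleteVertex {V : Type*} (G : SimpleGraph V) (a : V) : SimpleGraph V where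
  Adj x y := G.Adj x y ∧ x ≠ a ∧ y ≠ a
  symm := ⟨fun _ _ ⟨h, hx, hy⟩ => ⟨h.symm, hy, hx⟩⟩
  loopless := ⟨fun x h => G.loopless.irrefl x h.1⟩

/-- The chain graph on `k-1` orchestrator vertices `Sum.inl i` (representing `o_{i+1}`)
and `k` client vertices `Sum.inr j` (representing `c_{j+1}`): each orchestrator `o_i`
is adjacent exactly to clients `c_i` and `c_{i+1}`. -/
def chain (k : ℕ) : SimpleGraph (Fin (k-1) ⊕ Fin k) :=
  SimpleGraph.fromRel (fun x y => match x, y with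
    | Sum.inl i, Sum.inr j => j.val = i.val ∨ j.val = i.val + 1
    | _, _ => False)

/-- Intermediate state after processing the first `m` orchestrators. -/
def sg (k m : ℕ) : SimpleGraph (Fin (k-1) ⊕ Fin k) where
  Adj x y := match x, y with
    | Sum.inr i, Sum.inr j =>
        (j.val = i.val + 1 ∧ j.val ≤ m) ∨ (i.val = j.val + 1 ∧ i.val ≤ m)
    | Sum.inl i, Sum.inr j => m ≤ i.val ∧ (j.val = i.val ∨ j.val = i.val + 1)
    | Sum.inr j, Sum.inl i => m ≤ i.val ∧ (j.val = i.val ∨ j.val = i.val + 1)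
    | _, _ => False
  symm := ⟨by
    rintro (i | i) (j | j) h <;> simp_all <;> tauto⟩
  loopless := ⟨by
    rintro (i | i) h
    · simp_all
    · simp only at h; omega⟩

lemma sg_adj_left (k m : ℕ) (hm : m < k - 1) (z : Fin (k-1) ⊕ Fin k) :
    (sg k m).Adj (Sum.inl ⟨m, hm⟩) z ↔
      (z = Sum.inr ⟨m, by omega⟩ ∨ z = Sum.inr ⟨m + 1, by omega⟩) := by
  rcases z with i | j
  · simp [sg]
  · simp only [sg, Sum.inr.injEq, Fin.ext_iff]
    constructor
    · rintro ⟨-, h | h⟩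
      · left; omega
      · right; omega
    · rintro (h | h) <;> exact ⟨le_refl _, by omega⟩

lemma sg_step (k m : ℕ) (hm : m < k - 1) :
    deleteVertex (localComp (sg k m) (Sum.inl ⟨m, hm⟩)) (Sum.inl ⟨m, hm⟩)
      = sg k (m + 1) := by
  ext x y
  simp only [deleteVertex, localComp, sg_adj_left k m hm]
  rcases x with i | i
  · rcases y with j | j
    · simp [sg, Fin.ext_iff]
    · simp [sg, Fin.ext_iff]
      omega
  · rcases y with j | j
    · simp [sg, Fin.ext_iff]
      omega
    · simp [sg, Fin.ext_iff]
      omega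

lemma sg_zero (k : ℕ) : chain k = sg k 0 := by
  ext x y
  rcases x with i | i <;> rcases y with j | j <;>
    simp [chain, sg, SimpleGraph.fromRel_adj, Fin.ext_iff] <;> omega

lemma fold_aux {α : Type*} (n : ℕ) (f : α → Fin n → α) (g : ℕ → α)
    (h : ∀ i : Fin n, f (g i.val) i = g (i.val + 1)) :
    ∀ m, m ≤ n → ((List.finRange n).drop m).foldl f (g m) = g n := by
  suffices H : ∀ t m, m ≤ n → n - m = t →
      ((List.finRange n).drop m).foldl f (g m) = g n by
    exact fun m hm => H (n - m) m hm rfl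
  intro t
  induction t with
  | zero =>
      intro m hm ht
      have : m = n := by omega
      subst this
      rw [List.drop_eq_nil_of_le (by simp)]
      rfl
  | succ t ih =>
      intro m hm ht
      have hmn : m < n := by omega
      rw [List.drop_eq_getElem_cons (by simpa using hmn)]
      rw [List.getElem_finRange]
      simp only [List.foldl_cons]
      have hstep := h ⟨m, hmn⟩
      simp only [Fin.cast, Fin.eta] at *
      rw [hstep]
      exact ih (m + 1) (by omega) (by omega)

/-- Lemma 1 (bus topology from the chain graph): performing, for each orchestrator
vertex `o_1, …, o_{k-1}` in order, a local complementation at `o_i` followed by the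
deletion of `o_i`, turns the chain graph into the path (bus) graph on the `k` clients. -/
theorem chain_to_bus (k : ℕ) (hk : 2 ≤ k) :
    (List.finRange (k - 1)).foldl
        (fun G i => deleteVertex (localComp G (Sum.inl i)) (Sum.inl i)) (chain k)
      =
    SimpleGraph.fromRel (fun x y => match x, y with
      | Sum.inr i, Sum.inr j => (j : Fin k).val = (i : Fin k).val + 1
      | _, _ => False) := by
  have hfold := fold_aux (k - 1)
      (fun G i => deleteVertex (localComp G (Sum.inl i)) (Sum.inl i)) (sg k)
      (fun i => sg_step k i.val i.isLt) 0 (Nat.zero_le _)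
  simp only [List.drop_zero] at hfold
  rw [sg_zero, hfold]
  ext x y
  rcases x with i | i <;> rcases y with j | j <;>
    simp [sg, SimpleGraph.fromRel_adj, Fin.ext_iff] <;>
    first
      | omega
      | (have := i.isLt; have := j.isLt; omega)
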